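/- arXiv:0902.2274 — 3 statements merged into one kernel-verified Lean document; each statement's English description precedes it below -/
import Mathlib

section
/- Fix an integer b ≥ 2 and let 𝒜 be the 2b × 2b matrix over ℚ with rows and columns indexed by pairs (i,R), i ∈ {0, …, b−1}, R ∈ {P,N}, whose entry 𝒜_{(i,R),(j,S)} equals 1 if (i = j and R ≠ S), or (i > j), or (i < j and R = P and S = N), and equals 0 otherwise. Then the characteristic polynomial of 𝒜 equals X^{b−1} · (X − b) · (X + 1)^b. -/
/-- The adjacency matrix `𝒜 = ℰ + 𝒯 + 𝒰` of admissible compositions over `ℚ`,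
with rows and columns indexed by pairs `(i, R)`, `i ∈ Fin b`, `R ∈ {P, N}` (here
`P` is modelled by `true` and `N` by `false`): the entry at `((i,R), (j,S))` is
`1` iff `(i = j ∧ R ≠ S) ∨ i > j ∨ (i < j ∧ R = P ∧ S = N)`, and `0` otherwise. -/
def calA (b : ℕ) : Matrix (Fin b × Bool) (Fin b × Bool) ℚ :=
  fun p q =>
    if (p.1 = q.1 ∧ p.2 ≠ q.2) ∨ q.1 < p.1 ∨
        (p.1 < q.1 ∧ p.2 = true ∧ q.2 = false) then 1 else 0


open Matrix Polynomial Finset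

namespace CalApf

/-- Sum of an interval indicator times a constant. -/
lemma sum_ind (n a c : ℕ) (v : ℚ) :
    (∑ k : Fin n, if a ≤ (k : ℕ) ∧ (k : ℕ) < c then v else 0)
      = ((min c n - a : ℕ) : ℚ) * v := by
  induction n with
  | zero => simp
  | succ n ih =>
    rw [Fin.sum_univ_castSucc]
    simp only [Fin.coe_castSucc, Fin.val_last]
    rw [ih]
    by_cases h : a ≤ n ∧ n < c
    · rw [if_pos h]
      have h2 : (min c (n+1) - a : ℕ) = (min c n - a) + 1 := by omega
      rw [h2]; push_cast; ring
    · rw [if_neg h]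
      have h2 : (min c (n+1) - a : ℕ) = (min c n - a) := by omega
      rw [h2]; ring

/-- Sum of a singleton indicator. -/
lemma sum_single (n a : ℕ) (f : ℕ → ℚ) :
    (∑ k : Fin n, if (k : ℕ) = a then f k else 0)
      = if a < n then f a else 0 := by
  by_cases h : a < n
  · rw [if_pos h, Finset.sum_eq_single (⟨a, h⟩ : Fin n)]
    · simp
    · intro k _ hk
      rw [if_neg (by simpa [Fin.ext_iff] using hk)]
    · intro hmem; exact absurd (Finset.mem_univ _) hmem
  · rw [if_neg h, Finset.sum_eq_zero]
    intro k _
    rw [if_neg (by have := k.isLt; omega)]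

variable (b : ℕ)

def Dm : Matrix (Fin b) (Fin b) ℚ := of fun i j => if (i:ℕ) = (j:ℕ) then (j:ℚ) + 1 else 0
def Wm : Matrix (Fin b) (Fin b) ℚ := of fun i s =>
  if (i:ℕ) + (s:ℕ) + 1 = b ∧ (s:ℕ) + 2 ≤ b then (s:ℚ) + 1
  else if (i:ℕ) + (s:ℕ) + 2 = b then -((s:ℚ) + 1) else 0
def Lm : Matrix (Fin b) (Fin b) ℚ := of fun s j => if b ≤ (s:ℕ) + (j:ℕ) + 1 then (-1:ℚ) else 0
def T11 : Matrix (Fin b) (Fin b) ℚ := of fun i j => if (i:ℕ) ≤ (j:ℕ) then (-1:ℚ) else 0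
def T12 : Matrix (Fin b) (Fin b) ℚ := of fun i s => if (i:ℕ) = 0 ∧ (s:ℕ) + 1 = b then (b:ℚ) else 0
def T22 : Matrix (Fin b) (Fin b) ℚ := of fun s s' =>
  if (s:ℕ) < (s':ℕ) then (1:ℚ) else if (s:ℕ) + 1 = b ∧ (s':ℕ) + 1 = b then (b:ℚ) else 0
def N11 : Matrix (Fin b) (Fin b) ℚ := of fun i j => if (j:ℕ) < (i:ℕ) then (1:ℚ) else 0
def N12 : Matrix (Fin b) (Fin b) ℚ := of fun i s => if b ≤ (i:ℕ) + (s:ℕ) + 1 then (1:ℚ) else 0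
def N21 : Matrix (Fin b) (Fin b) ℚ := of fun _ _ => (1:ℚ)
def N22 : Matrix (Fin b) (Fin b) ℚ := of fun s s' => if (s:ℕ) < (s':ℕ) then (1:ℚ) else 0

def Pm : Matrix (Fin b ⊕ Fin b) (Fin b ⊕ Fin b) ℚ := fromBlocks (Dm b) (Wm b) (Lm b) 1
def Tm : Matrix (Fin b ⊕ Fin b) (Fin b ⊕ Fin b) ℚ := fromBlocks (T11 b) (T12 b) 0 (T22 b)
def Nm : Matrix (Fin b ⊕ Fin b) (Fin b ⊕ Fin b) ℚ := fromBlocks (N11 b) (N12 b) (N21 b) (N22 b)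

lemma eq11 : N11 b * Dm b + N12 b * Lm b = Dm b * T11 b := by
  ext i j
  have hi := i.isLt; have hj := j.isLt
  simp only [Matrix.add_apply, Matrix.mul_apply, N11, N12, Dm, Lm, T11, Matrix.of_apply]
  have e1 : (∑ k : Fin b, (if (k:ℕ) < (i:ℕ) then (1:ℚ) else 0) *
      (if (k:ℕ) = (j:ℕ) then (j:ℚ) + 1 else 0))
      = if (j:ℕ) < b then (if (j:ℕ) < (i:ℕ) then (j:ℚ)+1 else 0) else 0 := by
    refine (Finset.sum_congr rfl fun k _ => ?_).trans
      (sum_single b (j:ℕ) (fun _ => if (j:ℕ) < (i:ℕ) then (j:ℚ)+1 else 0))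
    show _ = if (k:ℕ) = (j:ℕ) then (if (j:ℕ) < (i:ℕ) then (j:ℚ)+1 else 0) else 0
    split_ifs <;> first | ring1 | (exfalso; omega)
  have e2 : (∑ k : Fin b, (if b ≤ (i:ℕ) + (k:ℕ) + 1 then (1:ℚ) else 0) *
      (if b ≤ (k:ℕ) + (j:ℕ) + 1 then (-1:ℚ) else 0))
      = ((min b b - (b - 1 - min (i:ℕ) (j:ℕ)) : ℕ) : ℚ) * (-1) := by
    refine (Finset.sum_congr rfl fun k _ => ?_).trans
      (sum_ind b (b - 1 - min (i:ℕ) (j:ℕ)) b (-1))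
    show _ = if (b - 1 - min (i:ℕ) (j:ℕ)) ≤ (k:ℕ) ∧ (k:ℕ) < b then (-1:ℚ) else 0
    have := k.isLt
    split_ifs <;> first | ring1 | (exfalso; omega)
  have e3 : (∑ k : Fin b, (if (i:ℕ) = (k:ℕ) then (k:ℚ) + 1 else 0) *
      (if (k:ℕ) ≤ (j:ℕ) then (-1:ℚ) else 0))
      = if (i:ℕ) < b then ((i:ℚ)+1) * (if (i:ℕ) ≤ (j:ℕ) then (-1:ℚ) else 0) else 0 := by
    refine (Finset.sum_congr rfl fun k _ => ?_).trans
      (sum_single b (i:ℕ) (fun k => ((k:ℚ)+1) * (if (i:ℕ) ≤ (j:ℕ) then (-1:ℚ) else 0)))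
    show _ = if (k:ℕ) = (i:ℕ) then ((k:ℚ)+1) * (if (i:ℕ) ≤ (j:ℕ) then (-1:ℚ) else 0) else 0
    split_ifs <;> first | ring1 | (exfalso; omega)
  rw [e1, e2, e3, if_pos hj, if_pos hi]
  have hmm : (min b b - (b - 1 - min (i:ℕ) (j:ℕ)) : ℕ) = min (i:ℕ) (j:ℕ) + 1 := by omega
  rw [hmm]
  by_cases h : (i:ℕ) ≤ (j:ℕ)
  · have hm : min (i:ℕ) (j:ℕ) = (i:ℕ) := by omega
    rw [hm, if_neg (by omega), if_pos h]; push_cast; ring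
  · have hm : min (i:ℕ) (j:ℕ) = (j:ℕ) := by omega
    rw [hm, if_pos (by omega), if_neg h]; push_cast; ring

lemma eq12 (hb : 2 ≤ b) : N11 b * Wm b + N12 b = Dm b * T12 b + Wm b * T22 b := by
  ext i s
  have hi := i.isLt; have hs := s.isLt
  simp only [Matrix.add_apply, Matrix.mul_apply, N11, N12, Dm, Wm, T12, T22, Matrix.of_apply]
  have e1 : (∑ k : Fin b, (if (k:ℕ) < (i:ℕ) then (1:ℚ) else 0) *
      (if (k:ℕ) + (s:ℕ) + 1 = b ∧ (s:ℕ) + 2 ≤ b then (s:ℚ) + 1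
        else if (k:ℕ) + (s:ℕ) + 2 = b then -((s:ℚ) + 1) else 0))
      = (if b ≤ (i:ℕ) + (s:ℕ) ∧ (s:ℕ)+2 ≤ b then (s:ℚ)+1 else 0)
        + (if b ≤ (i:ℕ) + (s:ℕ) + 1 ∧ (s:ℕ)+2 ≤ b then -((s:ℚ)+1) else 0) := by
    have step : ∀ k : Fin b, (if (k:ℕ) < (i:ℕ) then (1:ℚ) else 0) *
        (if (k:ℕ) + (s:ℕ) + 1 = b ∧ (s:ℕ) + 2 ≤ b then (s:ℚ) + 1
          else if (k:ℕ) + (s:ℕ) + 2 = b then -((s:ℚ) + 1) else 0)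
        = (if (k:ℕ) = b - 1 - (s:ℕ) then
            (if b ≤ (i:ℕ) + (s:ℕ) ∧ (s:ℕ)+2 ≤ b then (s:ℚ)+1 else 0) else 0)
          + (if (k:ℕ) = b - 2 - (s:ℕ) then
            (if b ≤ (i:ℕ) + (s:ℕ) + 1 ∧ (s:ℕ)+2 ≤ b then -((s:ℚ)+1) else 0) else 0) := by
      intro k
      have := k.isLt
      split_ifs <;> first | ring1 | (exfalso; omega)
    have A1 : (∑ k : Fin b, if (k:ℕ) = b - 1 - (s:ℕ) then
        (if b ≤ (i:ℕ) + (s:ℕ) ∧ (s:ℕ)+2 ≤ b then (s:ℚ)+1 else 0) else 0)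
        = (if b ≤ (i:ℕ) + (s:ℕ) ∧ (s:ℕ)+2 ≤ b then (s:ℚ)+1 else 0) :=
      (sum_single b (b - 1 - (s:ℕ))
        (fun _ => if b ≤ (i:ℕ) + (s:ℕ) ∧ (s:ℕ)+2 ≤ b then (s:ℚ)+1 else 0)).trans
        (if_pos (by omega))
    have A2 : (∑ k : Fin b, if (k:ℕ) = b - 2 - (s:ℕ) then
        (if b ≤ (i:ℕ) + (s:ℕ) + 1 ∧ (s:ℕ)+2 ≤ b then -((s:ℚ)+1) else 0) else 0)
        = (if b ≤ (i:ℕ) + (s:ℕ) + 1 ∧ (s:ℕ)+2 ≤ b then -((s:ℚ)+1) else 0) :=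
      (sum_single b (b - 2 - (s:ℕ))
        (fun _ => if b ≤ (i:ℕ) + (s:ℕ) + 1 ∧ (s:ℕ)+2 ≤ b then -((s:ℚ)+1) else 0)).trans
        (if_pos (by omega))
    rw [Finset.sum_congr rfl (fun k _ => step k), Finset.sum_add_distrib, A1, A2]
  have e3 : (∑ k : Fin b, (if (i:ℕ) = (k:ℕ) then (k:ℚ) + 1 else 0) *
      (if (k:ℕ) = 0 ∧ (s:ℕ) + 1 = b then (b:ℚ) else 0))
      = ((i:ℚ)+1) * (if (i:ℕ) = 0 ∧ (s:ℕ)+1 = b then (b:ℚ) else 0) := by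
    refine ((Finset.sum_congr rfl fun k _ => ?_).trans
      (sum_single b (i:ℕ) (fun k => ((k:ℚ)+1) *
        (if (i:ℕ) = 0 ∧ (s:ℕ)+1 = b then (b:ℚ) else 0)))).trans (by rw [if_pos hi])
    show _ = if (k:ℕ) = (i:ℕ) then ((k:ℚ)+1) *
        (if (i:ℕ) = 0 ∧ (s:ℕ)+1 = b then (b:ℚ) else 0) else 0
    split_ifs <;> first | ring1 | (exfalso; omega)
  have e4 : (∑ k : Fin b, (if (i:ℕ) + (k:ℕ) + 1 = b ∧ (k:ℕ) + 2 ≤ b then (k:ℚ) + 1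
        else if (i:ℕ) + (k:ℕ) + 2 = b then -((k:ℚ) + 1) else 0) *
      (if (k:ℕ) < (s:ℕ) then (1:ℚ)
        else if (k:ℕ) + 1 = b ∧ (s:ℕ) + 1 = b then (b:ℚ) else 0))
      = (if 1 ≤ (i:ℕ) ∧ b ≤ (i:ℕ) + (s:ℕ) then ((b - 1 - (i:ℕ) : ℕ) : ℚ) + 1 else 0)
        + (if (i:ℕ) + 2 ≤ b ∧ b ≤ (i:ℕ) + (s:ℕ) + 1 then
            -(((b - 2 - (i:ℕ) : ℕ) : ℚ) + 1) else 0) := by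
    have step : ∀ k : Fin b, (if (i:ℕ) + (k:ℕ) + 1 = b ∧ (k:ℕ) + 2 ≤ b then (k:ℚ) + 1
        else if (i:ℕ) + (k:ℕ) + 2 = b then -((k:ℚ) + 1) else 0) *
      (if (k:ℕ) < (s:ℕ) then (1:ℚ)
        else if (k:ℕ) + 1 = b ∧ (s:ℕ) + 1 = b then (b:ℚ) else 0)
        = (if (k:ℕ) = b - 1 - (i:ℕ) then
            (if 1 ≤ (i:ℕ) ∧ b ≤ (i:ℕ) + (s:ℕ) then ((k:ℚ)+1) else 0) else 0)
          + (if (k:ℕ) = b - 2 - (i:ℕ) then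
            (if (i:ℕ) + 2 ≤ b ∧ b ≤ (i:ℕ) + (s:ℕ) + 1 then -((k:ℚ)+1) else 0) else 0) := by
      intro k
      have := k.isLt
      split_ifs <;> first | ring1 | (exfalso; omega)
    have A1 : (∑ k : Fin b, if (k:ℕ) = b - 1 - (i:ℕ) then
        (if 1 ≤ (i:ℕ) ∧ b ≤ (i:ℕ) + (s:ℕ) then ((k:ℚ)+1) else 0) else 0)
        = (if 1 ≤ (i:ℕ) ∧ b ≤ (i:ℕ) + (s:ℕ) then ((b - 1 - (i:ℕ) : ℕ) : ℚ) + 1 else 0) := by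
      refine (sum_single b (b - 1 - (i:ℕ))
        (fun k => if 1 ≤ (i:ℕ) ∧ b ≤ (i:ℕ) + (s:ℕ) then ((k:ℚ)+1) else 0)).trans ?_
      rw [if_pos (by omega)]
    have A2 : (∑ k : Fin b, if (k:ℕ) = b - 2 - (i:ℕ) then
        (if (i:ℕ) + 2 ≤ b ∧ b ≤ (i:ℕ) + (s:ℕ) + 1 then -((k:ℚ)+1) else 0) else 0)
        = (if (i:ℕ) + 2 ≤ b ∧ b ≤ (i:ℕ) + (s:ℕ) + 1 then
            -(((b - 2 - (i:ℕ) : ℕ) : ℚ) + 1) else 0) := by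
      refine (sum_single b (b - 2 - (i:ℕ))
        (fun k => if (i:ℕ) + 2 ≤ b ∧ b ≤ (i:ℕ) + (s:ℕ) + 1 then -((k:ℚ)+1) else 0)).trans ?_
      rw [if_pos (by omega)]
    rw [Finset.sum_congr rfl (fun k _ => step k), Finset.sum_add_distrib, A1, A2]
  rw [e1, e3, e4]
  rcases lt_or_ge ((i:ℕ) + (s:ℕ) + 1) b with h | h
  · rw [if_neg (show ¬(b ≤ (i:ℕ)+(s:ℕ) ∧ (s:ℕ)+2 ≤ b) by omega),
      if_neg (show ¬(b ≤ (i:ℕ)+(s:ℕ)+1 ∧ (s:ℕ)+2 ≤ b) by omega),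
      if_neg (show ¬ b ≤ (i:ℕ)+(s:ℕ)+1 by omega),
      if_neg (show ¬((i:ℕ) = 0 ∧ (s:ℕ)+1 = b) by omega),
      if_neg (show ¬(1 ≤ (i:ℕ) ∧ b ≤ (i:ℕ)+(s:ℕ)) by omega),
      if_neg (show ¬((i:ℕ)+2 ≤ b ∧ b ≤ (i:ℕ)+(s:ℕ)+1) by omega)]
    ring
  rcases eq_or_lt_of_le h with h2 | h3
  · -- b = i + s + 1
    by_cases hI : (i:ℕ) = 0
    · rw [if_neg (show ¬(b ≤ (i:ℕ)+(s:ℕ) ∧ (s:ℕ)+2 ≤ b) by omega),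
        if_neg (show ¬(b ≤ (i:ℕ)+(s:ℕ)+1 ∧ (s:ℕ)+2 ≤ b) by omega),
        if_pos (show b ≤ (i:ℕ)+(s:ℕ)+1 by omega),
        if_pos (show (i:ℕ) = 0 ∧ (s:ℕ)+1 = b by omega),
        if_neg (show ¬(1 ≤ (i:ℕ) ∧ b ≤ (i:ℕ)+(s:ℕ)) by omega),
        if_pos (show (i:ℕ)+2 ≤ b ∧ b ≤ (i:ℕ)+(s:ℕ)+1 by omega),
        show ((b - 2 - (i:ℕ) : ℕ) : ℚ) = (b:ℚ) - 2 by
          rw [show b - 2 - (i:ℕ) = b - 2 by omega, Nat.cast_sub (by omega)]; push_cast; ring,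
        show ((i:ℕ):ℚ) = 0 by exact_mod_cast hI]
      ring
    · rw [if_neg (show ¬(b ≤ (i:ℕ)+(s:ℕ) ∧ (s:ℕ)+2 ≤ b) by omega),
        if_pos (show b ≤ (i:ℕ)+(s:ℕ)+1 ∧ (s:ℕ)+2 ≤ b by omega),
        if_pos (show b ≤ (i:ℕ)+(s:ℕ)+1 by omega),
        if_neg (show ¬((i:ℕ) = 0 ∧ (s:ℕ)+1 = b) by omega),
        if_neg (show ¬(1 ≤ (i:ℕ) ∧ b ≤ (i:ℕ)+(s:ℕ)) by omega)]
      by_cases hS : 1 ≤ (s:ℕ)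
      · rw [if_pos (show (i:ℕ)+2 ≤ b ∧ b ≤ (i:ℕ)+(s:ℕ)+1 by omega),
          show ((b - 2 - (i:ℕ) : ℕ) : ℚ) = (s:ℚ) - 1 by
            rw [show b - 2 - (i:ℕ) = (s:ℕ) - 1 by omega, Nat.cast_sub (by omega)]
            push_cast; ring]
        ring
      · rw [if_neg (show ¬((i:ℕ)+2 ≤ b ∧ b ≤ (i:ℕ)+(s:ℕ)+1) by omega),
          show ((s:ℕ):ℚ) = 0 by exact_mod_cast (show (s:ℕ) = 0 by omega)]
        ring
  · -- b ≤ i + s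
    have hI : 1 ≤ (i:ℕ) := by omega
    have c1 : ((b - 1 - (i:ℕ) : ℕ) : ℚ) = (b:ℚ) - (i:ℚ) - 1 := by
      rw [show b - 1 - (i:ℕ) = b - ((i:ℕ)+1) by omega, Nat.cast_sub (by omega)]
      push_cast; ring
    rw [if_pos (show b ≤ (i:ℕ)+(s:ℕ)+1 by omega),
      if_neg (show ¬((i:ℕ) = 0 ∧ (s:ℕ)+1 = b) by omega),
      if_pos (show 1 ≤ (i:ℕ) ∧ b ≤ (i:ℕ)+(s:ℕ) by omega), c1]
    by_cases hI2 : (i:ℕ)+2 ≤ b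
    · have c2 : ((b - 2 - (i:ℕ) : ℕ) : ℚ) = (b:ℚ) - (i:ℚ) - 2 := by
        rw [show b - 2 - (i:ℕ) = b - ((i:ℕ)+2) by omega, Nat.cast_sub (by omega)]
        push_cast; ring
      rw [if_pos (show (i:ℕ)+2 ≤ b ∧ b ≤ (i:ℕ)+(s:ℕ)+1 by omega), c2]
      by_cases hS2 : (s:ℕ)+2 ≤ b
      · rw [if_pos (show b ≤ (i:ℕ)+(s:ℕ) ∧ (s:ℕ)+2 ≤ b by omega),
          if_pos (show b ≤ (i:ℕ)+(s:ℕ)+1 ∧ (s:ℕ)+2 ≤ b by omega)]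
        ring
      · rw [if_neg (show ¬(b ≤ (i:ℕ)+(s:ℕ) ∧ (s:ℕ)+2 ≤ b) by omega),
          if_neg (show ¬(b ≤ (i:ℕ)+(s:ℕ)+1 ∧ (s:ℕ)+2 ≤ b) by omega)]
        ring
    · have hi1 : ((i:ℕ):ℚ) + 1 = (b:ℚ) := by exact_mod_cast (show (i:ℕ)+1 = b by omega)
      rw [if_neg (show ¬((i:ℕ)+2 ≤ b ∧ b ≤ (i:ℕ)+(s:ℕ)+1) by omega)]
      by_cases hS2 : (s:ℕ)+2 ≤ b
      · rw [if_pos (show b ≤ (i:ℕ)+(s:ℕ) ∧ (s:ℕ)+2 ≤ b by omega),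
          if_pos (show b ≤ (i:ℕ)+(s:ℕ)+1 ∧ (s:ℕ)+2 ≤ b by omega)]
        linarith
      · rw [if_neg (show ¬(b ≤ (i:ℕ)+(s:ℕ) ∧ (s:ℕ)+2 ≤ b) by omega),
          if_neg (show ¬(b ≤ (i:ℕ)+(s:ℕ)+1 ∧ (s:ℕ)+2 ≤ b) by omega)]
        linarith

lemma eq21 : N21 b * Dm b + N22 b * Lm b = Lm b * T11 b := by
  ext s j
  have hs := s.isLt; have hj := j.isLt
  simp only [Matrix.add_apply, Matrix.mul_apply, N21, N22, Dm, Lm, T11, Matrix.of_apply]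
  have e1 : (∑ k : Fin b, (1:ℚ) * (if (k:ℕ) = (j:ℕ) then (j:ℚ) + 1 else 0))
      = (j:ℚ) + 1 := by
    refine ((Finset.sum_congr rfl fun k _ => ?_).trans
      (sum_single b (j:ℕ) (fun _ => (j:ℚ)+1))).trans (by rw [if_pos hj])
    show _ = if (k:ℕ) = (j:ℕ) then (j:ℚ)+1 else 0
    split_ifs <;> ring1
  have e2 : (∑ k : Fin b, (if (s:ℕ) < (k:ℕ) then (1:ℚ) else 0) *
      (if b ≤ (k:ℕ) + (j:ℕ) + 1 then (-1:ℚ) else 0))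
      = ((min b b - max ((s:ℕ)+1) (b - 1 - (j:ℕ)) : ℕ) : ℚ) * (-1) := by
    refine (Finset.sum_congr rfl fun k _ => ?_).trans
      (sum_ind b (max ((s:ℕ)+1) (b - 1 - (j:ℕ))) b (-1))
    show _ = if max ((s:ℕ)+1) (b - 1 - (j:ℕ)) ≤ (k:ℕ) ∧ (k:ℕ) < b then (-1:ℚ) else 0
    have := k.isLt
    split_ifs <;> first | ring1 | (exfalso; omega)
  have e3 : (∑ k : Fin b, (if b ≤ (s:ℕ) + (k:ℕ) + 1 then (-1:ℚ) else 0) *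
      (if (k:ℕ) ≤ (j:ℕ) then (-1:ℚ) else 0))
      = ((min ((j:ℕ)+1) b - (b - 1 - (s:ℕ)) : ℕ) : ℚ) * 1 := by
    refine (Finset.sum_congr rfl fun k _ => ?_).trans
      (sum_ind b (b - 1 - (s:ℕ)) ((j:ℕ)+1) 1)
    show _ = if (b - 1 - (s:ℕ)) ≤ (k:ℕ) ∧ (k:ℕ) < (j:ℕ)+1 then (1:ℚ) else 0
    have := k.isLt
    split_ifs <;> first | ring1 | (exfalso; omega)
  rw [e1, e2, e3]
  by_cases h : b ≤ (s:ℕ) + (j:ℕ) + 2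
  · rw [show (min b b - max ((s:ℕ)+1) (b - 1 - (j:ℕ)) : ℕ) = b - ((s:ℕ)+1) by omega,
      show (min ((j:ℕ)+1) b - (b - 1 - (s:ℕ)) : ℕ) = (s:ℕ) + (j:ℕ) + 2 - b by omega,
      Nat.cast_sub (by omega), Nat.cast_sub (by omega)]
    push_cast; ring
  · rw [show (min b b - max ((s:ℕ)+1) (b - 1 - (j:ℕ)) : ℕ) = (j:ℕ) + 1 by omega,
      show (min ((j:ℕ)+1) b - (b - 1 - (s:ℕ)) : ℕ) = 0 by omega]
    push_cast; ring

lemma eq22 : N21 b * Wm b + N22 b = Lm b * T12 b + T22 b := by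
  ext s s'
  have hs := s.isLt; have hs' := s'.isLt
  simp only [Matrix.add_apply, Matrix.mul_apply, N21, N22, Wm, Lm, T12, T22, Matrix.of_apply]
  have e1 : (∑ k : Fin b, (1:ℚ) *
      (if (k:ℕ) + (s':ℕ) + 1 = b ∧ (s':ℕ) + 2 ≤ b then (s':ℚ) + 1
        else if (k:ℕ) + (s':ℕ) + 2 = b then -((s':ℚ) + 1) else 0)) = 0 := by
    have step : ∀ k : Fin b, (1:ℚ) *
        (if (k:ℕ) + (s':ℕ) + 1 = b ∧ (s':ℕ) + 2 ≤ b then (s':ℚ) + 1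
          else if (k:ℕ) + (s':ℕ) + 2 = b then -((s':ℚ) + 1) else 0)
        = (if (k:ℕ) = b - 1 - (s':ℕ) then (if (s':ℕ)+2 ≤ b then (s':ℚ)+1 else 0) else 0)
          + (if (k:ℕ) = b - 2 - (s':ℕ) then (if (s':ℕ)+2 ≤ b then -((s':ℚ)+1) else 0) else 0) := by
      intro k
      have := k.isLt
      split_ifs <;> first | ring1 | (exfalso; omega)
    have A1 : (∑ k : Fin b, if (k:ℕ) = b - 1 - (s':ℕ) then
        (if (s':ℕ)+2 ≤ b then (s':ℚ)+1 else 0) else 0)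
        = (if (s':ℕ)+2 ≤ b then (s':ℚ)+1 else 0) :=
      (sum_single b (b - 1 - (s':ℕ))
        (fun _ => if (s':ℕ)+2 ≤ b then (s':ℚ)+1 else 0)).trans (if_pos (by omega))
    have A2 : (∑ k : Fin b, if (k:ℕ) = b - 2 - (s':ℕ) then
        (if (s':ℕ)+2 ≤ b then -((s':ℚ)+1) else 0) else 0)
        = (if (s':ℕ)+2 ≤ b then -((s':ℚ)+1) else 0) :=
      (sum_single b (b - 2 - (s':ℕ))
        (fun _ => if (s':ℕ)+2 ≤ b then -((s':ℚ)+1) else 0)).trans (if_pos (by omega))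
    rw [Finset.sum_congr rfl (fun k _ => step k), Finset.sum_add_distrib, A1, A2]
    split_ifs <;> ring
  have e3 : (∑ k : Fin b, (if b ≤ (s:ℕ) + (k:ℕ) + 1 then (-1:ℚ) else 0) *
      (if (k:ℕ) = 0 ∧ (s':ℕ) + 1 = b then (b:ℚ) else 0))
      = if (s:ℕ) + 1 = b ∧ (s':ℕ) + 1 = b then -(b:ℚ) else 0 := by
    refine ((Finset.sum_congr rfl fun k _ => ?_).trans
      (sum_single b 0 (fun _ => if (s:ℕ)+1 = b ∧ (s':ℕ)+1 = b then -(b:ℚ) else 0))).trans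
      (by rw [if_pos (by omega)])
    show _ = if (k:ℕ) = 0 then (if (s:ℕ)+1 = b ∧ (s':ℕ)+1 = b then -(b:ℚ) else 0) else 0
    split_ifs <;> first | ring1 | (exfalso; omega)
  rw [e1, e3]
  split_ifs <;> first | ring1 | (exfalso; omega)

lemma NPPT (hb : 2 ≤ b) : Nm b * Pm b = Pm b * Tm b := by
  rw [Nm, Pm, Tm, fromBlocks_multiply, fromBlocks_multiply]
  simp only [Matrix.mul_one, Matrix.mul_zero, Matrix.one_mul, Matrix.zero_mul,
    add_zero, zero_add]
  rw [eq11, eq12 b hb, eq21, eq22]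

def Gm : Matrix (Fin b) (Fin b) ℚ := of fun i j =>
  if (i:ℕ) = (j:ℕ) then (if (i:ℕ) = 0 then 1 else (b:ℚ)+1)
  else if (i:ℕ) < (j:ℕ) then (if (i:ℕ) = 0 then 1-(b:ℚ) else 1) else 0

lemma DWL : Dm b - Wm b * Lm b = Gm b := by
  ext i j
  have hi := i.isLt; have hj := j.isLt
  simp only [Matrix.sub_apply, Matrix.mul_apply, Dm, Wm, Lm, Gm, Matrix.of_apply]
  have e4 : (∑ k : Fin b, (if (i:ℕ) + (k:ℕ) + 1 = b ∧ (k:ℕ) + 2 ≤ b then (k:ℚ) + 1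
        else if (i:ℕ) + (k:ℕ) + 2 = b then -((k:ℚ) + 1) else 0) *
      (if b ≤ (k:ℕ) + (j:ℕ) + 1 then (-1:ℚ) else 0))
      = (if 1 ≤ (i:ℕ) ∧ (i:ℕ) ≤ (j:ℕ) then -(((b - 1 - (i:ℕ) : ℕ) : ℚ) + 1) else 0)
        + (if (i:ℕ) + 2 ≤ b ∧ (i:ℕ) + 1 ≤ (j:ℕ) then ((b - 2 - (i:ℕ) : ℕ) : ℚ) + 1 else 0) := by
    have step : ∀ k : Fin b, (if (i:ℕ) + (k:ℕ) + 1 = b ∧ (k:ℕ) + 2 ≤ b then (k:ℚ) + 1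
        else if (i:ℕ) + (k:ℕ) + 2 = b then -((k:ℚ) + 1) else 0) *
      (if b ≤ (k:ℕ) + (j:ℕ) + 1 then (-1:ℚ) else 0)
        = (if (k:ℕ) = b - 1 - (i:ℕ) then
            (if 1 ≤ (i:ℕ) ∧ (i:ℕ) ≤ (j:ℕ) then -((k:ℚ)+1) else 0) else 0)
          + (if (k:ℕ) = b - 2 - (i:ℕ) then
            (if (i:ℕ) + 2 ≤ b ∧ (i:ℕ) + 1 ≤ (j:ℕ) then ((k:ℚ)+1) else 0) else 0) := by
      intro k
      have := k.isLt
      split_ifs <;> first | ring1 | (exfalso; omega)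
    have A1 : (∑ k : Fin b, if (k:ℕ) = b - 1 - (i:ℕ) then
        (if 1 ≤ (i:ℕ) ∧ (i:ℕ) ≤ (j:ℕ) then -((k:ℚ)+1) else 0) else 0)
        = (if 1 ≤ (i:ℕ) ∧ (i:ℕ) ≤ (j:ℕ) then -(((b - 1 - (i:ℕ) : ℕ) : ℚ) + 1) else 0) := by
      refine (sum_single b (b - 1 - (i:ℕ))
        (fun k => if 1 ≤ (i:ℕ) ∧ (i:ℕ) ≤ (j:ℕ) then -((k:ℚ)+1) else 0)).trans ?_
      rw [if_pos (by omega)]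
    have A2 : (∑ k : Fin b, if (k:ℕ) = b - 2 - (i:ℕ) then
        (if (i:ℕ) + 2 ≤ b ∧ (i:ℕ) + 1 ≤ (j:ℕ) then ((k:ℚ)+1) else 0) else 0)
        = (if (i:ℕ) + 2 ≤ b ∧ (i:ℕ) + 1 ≤ (j:ℕ) then ((b - 2 - (i:ℕ) : ℕ) : ℚ) + 1 else 0) := by
      refine (sum_single b (b - 2 - (i:ℕ))
        (fun k => if (i:ℕ) + 2 ≤ b ∧ (i:ℕ) + 1 ≤ (j:ℕ) then ((k:ℚ)+1) else 0)).trans ?_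
      rw [if_pos (by omega)]
    rw [Finset.sum_congr rfl (fun k _ => step k), Finset.sum_add_distrib, A1, A2]
  rw [e4]
  rcases lt_trichotomy ((i:ℕ)) ((j:ℕ)) with h | h | h
  · rw [if_neg (show ¬ (i:ℕ) = (j:ℕ) by omega), if_neg (show ¬ (i:ℕ) = (j:ℕ) by omega),
      if_pos (show (i:ℕ) < (j:ℕ) from h)]
    by_cases hI : (i:ℕ) = 0
    · rw [if_pos (show (i:ℕ) = 0 from hI),
        if_neg (show ¬(1 ≤ (i:ℕ) ∧ (i:ℕ) ≤ (j:ℕ)) by omega),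
        if_pos (show (i:ℕ)+2 ≤ b ∧ (i:ℕ)+1 ≤ (j:ℕ) by omega),
        show ((b - 2 - (i:ℕ) : ℕ) : ℚ) = (b:ℚ) - 2 by
          rw [show b - 2 - (i:ℕ) = b - 2 by omega, Nat.cast_sub (by omega)]; push_cast; ring]
      ring
    · rw [if_neg (show ¬ (i:ℕ) = 0 from hI),
        if_pos (show 1 ≤ (i:ℕ) ∧ (i:ℕ) ≤ (j:ℕ) by omega),
        if_pos (show (i:ℕ)+2 ≤ b ∧ (i:ℕ)+1 ≤ (j:ℕ) by omega),
        show ((b - 1 - (i:ℕ) : ℕ) : ℚ) = (b:ℚ) - (i:ℚ) - 1 by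
          rw [show b - 1 - (i:ℕ) = b - ((i:ℕ)+1) by omega, Nat.cast_sub (by omega)]
          push_cast; ring,
        show ((b - 2 - (i:ℕ) : ℕ) : ℚ) = (b:ℚ) - (i:ℚ) - 2 by
          rw [show b - 2 - (i:ℕ) = b - ((i:ℕ)+2) by omega, Nat.cast_sub (by omega)]
          push_cast; ring]
      ring
  · rw [if_pos (show (i:ℕ) = (j:ℕ) from h), if_pos (show (i:ℕ) = (j:ℕ) from h),
      if_neg (show ¬((i:ℕ)+2 ≤ b ∧ (i:ℕ)+1 ≤ (j:ℕ)) by omega)]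
    by_cases hI : (i:ℕ) = 0
    · rw [if_pos (show (i:ℕ) = 0 from hI),
        if_neg (show ¬(1 ≤ (i:ℕ) ∧ (i:ℕ) ≤ (j:ℕ)) by omega),
        show ((j:ℕ):ℚ) = 0 by exact_mod_cast (show (j:ℕ) = 0 by omega)]
      ring
    · rw [if_neg (show ¬ (i:ℕ) = 0 from hI),
        if_pos (show 1 ≤ (i:ℕ) ∧ (i:ℕ) ≤ (j:ℕ) by omega),
        show ((b - 1 - (i:ℕ) : ℕ) : ℚ) = (b:ℚ) - (j:ℚ) - 1 by
          rw [show b - 1 - (i:ℕ) = b - ((j:ℕ)+1) by omega, Nat.cast_sub (by omega)]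
          push_cast; ring]
      ring
  · rw [if_neg (show ¬ (i:ℕ) = (j:ℕ) by omega), if_neg (show ¬ (i:ℕ) = (j:ℕ) by omega),
      if_neg (show ¬ (i:ℕ) < (j:ℕ) by omega),
      if_neg (show ¬(1 ≤ (i:ℕ) ∧ (i:ℕ) ≤ (j:ℕ)) by omega),
      if_neg (show ¬((i:ℕ)+2 ≤ b ∧ (i:ℕ)+1 ≤ (j:ℕ)) by omega)]
    ring

lemma detPm_ne : (Pm b).det ≠ 0 := by
  have hE : (fromBlocks 1 (-(Wm b)) 0 1 : Matrix (Fin b ⊕ Fin b) (Fin b ⊕ Fin b) ℚ) * Pm b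
      = fromBlocks (Dm b - Wm b * Lm b) 0 (Lm b) 1 := by
    rw [Pm, fromBlocks_multiply]
    simp only [Matrix.one_mul, Matrix.mul_one, Matrix.zero_mul, Matrix.neg_mul,
      zero_add, add_zero, add_neg_cancel, ← sub_eq_add_neg]
  have hdet := congrArg Matrix.det hE
  rw [Matrix.det_mul, Matrix.det_fromBlocks_zero₂₁, Matrix.det_fromBlocks_zero₁₂,
    Matrix.det_one, DWL] at hdet
  simp only [one_mul, mul_one] at hdet
  rw [hdet]
  have htri : (Gm b).BlockTriangular id := by
    intro i j hij
    have : (j:ℕ) < (i:ℕ) := hij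
    simp only [Gm, Matrix.of_apply]
    rw [if_neg (by omega), if_neg (by omega)]
  rw [Matrix.det_of_upperTriangular htri]
  refine Finset.prod_ne_zero_iff.mpr fun i _ => ?_
  simp only [Gm, Matrix.of_apply, if_true]
  split_ifs
  · norm_num
  · positivity

lemma charTm (hb : 1 ≤ b) : (Tm b).charpoly
    = (X + 1)^b * ((X : ℚ[X])^(b-1) * (X - C (b:ℚ))) := by
  obtain ⟨n, rfl⟩ : ∃ n, b = n + 1 := ⟨b - 1, by omega⟩
  rw [Tm, Matrix.charpoly_fromBlocks_zero₂₁]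
  have h1 : (T11 (n+1)).charpoly = (X + 1)^(n+1) := by
    have htri : (T11 (n+1)).BlockTriangular id := by
      intro i j hij
      have : (j:ℕ) < (i:ℕ) := hij
      simp only [T11, Matrix.of_apply]
      rw [if_neg (by omega)]
    rw [Matrix.charpoly_of_upperTriangular _ htri]
    have hfac : ∀ i : Fin (n+1), (X - C ((T11 (n+1)) i i)) = X + 1 := by
      intro i
      simp only [T11, Matrix.of_apply]
      rw [if_pos le_rfl]
      simp
    rw [Finset.prod_congr rfl (fun i _ => hfac i), Finset.prod_const,
      Finset.card_univ, Fintype.card_fin]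
  have h2 : (T22 (n+1)).charpoly = (X : ℚ[X])^n * (X - C ((n+1:ℕ):ℚ)) := by
    have htri : (T22 (n+1)).BlockTriangular id := by
      intro i j hij
      have h : (j:ℕ) < (i:ℕ) := hij
      simp only [T22, Matrix.of_apply]
      rw [if_neg (by omega), if_neg (by omega)]
    rw [Matrix.charpoly_of_upperTriangular _ htri, Fin.prod_univ_castSucc]
    have hfac : ∀ i : Fin n, (X - C ((T22 (n+1)) i.castSucc i.castSucc)) = X := by
      intro i
      have hi := i.isLt
      simp only [T22, Matrix.of_apply, Fin.coe_castSucc]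
      rw [if_neg (show ¬ (i:ℕ) < (i:ℕ) by omega),
        if_neg (show ¬((i:ℕ)+1 = n+1 ∧ (i:ℕ)+1 = n+1) by omega)]
      simp
    have hlast : (X - C ((T22 (n+1)) (Fin.last n) (Fin.last n))) = X - C ((n+1:ℕ):ℚ) := by
      simp [T22]
    rw [Finset.prod_congr rfl (fun i _ => hfac i), Finset.prod_const,
      Finset.card_univ, Fintype.card_fin, hlast]
  rw [h1, h2]
  simp

lemma charNm (hb : 2 ≤ b) : (Nm b).charpoly = (Tm b).charpoly := by
  have hmul := NPPT b hb
  have hc : charmatrix (Nm b) * (Pm b).map C = (Pm b).map C * charmatrix (Tm b) := by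
    rw [charmatrix, charmatrix, sub_mul, mul_sub]
    congr 1
    · exact (scalar_commute (X : ℚ[X]) (fun r => Commute.all _ _) ((Pm b).map C)).eq
    · rw [RingHom.mapMatrix_apply, RingHom.mapMatrix_apply, ← Matrix.map_mul, hmul,
        Matrix.map_mul]
  have hdet := congrArg Matrix.det hc
  rw [Matrix.det_mul, Matrix.det_mul,
    show ((Pm b).map (C : ℚ →+* ℚ[X])).det = C ((Pm b).det) from
      ((Polynomial.C : ℚ →+* ℚ[X]).map_det (Pm b)).symm] at hdet
  have hC : (C ((Pm b).det) : ℚ[X]) ≠ 0 := by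
    simpa using detPm_ne b
  apply mul_right_cancel₀ hC
  show (Nm b).charpoly * C ((Pm b).det) = (Tm b).charpoly * C ((Pm b).det)
  rw [Matrix.charpoly, Matrix.charpoly, hdet, mul_comm]

def eqv : (Fin b ⊕ Fin b) ≃ (Fin b × Bool) where
  toFun x := Sum.elim (fun i => (i, false)) (fun s => (s.rev, true)) x
  invFun p := match p with
    | (j, false) => Sum.inl j
    | (j, true) => Sum.inr j.rev
  left_inv := by rintro (i | s) <;> simp
  right_inv := by rintro ⟨j, (_ | _)⟩ <;> simp

lemma reindex_eq : Matrix.reindex (eqv b) (eqv b) (Nm b) = calA b := by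
  ext ⟨i, bi⟩ ⟨j, bj⟩
  have hi := i.isLt; have hj := j.isLt
  cases bi <;> cases bj
  · -- (i, false), (j, false)
    show Nm b (Sum.inl i) (Sum.inl j) = calA b (i, false) (j, false)
    simp only [Nm, fromBlocks_apply₁₁, N11, Matrix.of_apply, calA]
    refine if_congr ?_ rfl rfl
    constructor
    · intro h
      exact Or.inr (Or.inl h)
    · rintro (⟨h1, h2⟩ | h | ⟨h1, h2, h3⟩)
      · exact absurd rfl h2
      · exact h
      · exact absurd h2 (by simp)
  · -- (i, false), (j, true)
    show Nm b (Sum.inl i) (Sum.inr j.rev) = calA b (i, false) (j, true)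
    simp only [Nm, fromBlocks_apply₁₂, N12, Matrix.of_apply, calA]
    refine if_congr ?_ rfl rfl
    have hrev : (j.rev : ℕ) = b - (j + 1) := Fin.val_rev j
    constructor
    · intro h
      rcases lt_trichotomy j i with h' | h' | h'
      · exact Or.inr (Or.inl h')
      · exact Or.inl ⟨h'.symm, by simp⟩
      · exfalso
        have : (i:ℕ) < (j:ℕ) := h'
        omega
    · rintro (⟨h1, h2⟩ | h | ⟨h1, h2, h3⟩)
      · have : (i:ℕ) = (j:ℕ) := by rw [h1]
        omega
      · have : (j:ℕ) < (i:ℕ) := h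
        omega
      · exact absurd h2 (by simp)
  · -- (i, true), (j, false)
    show Nm b (Sum.inr i.rev) (Sum.inl j) = calA b (i, true) (j, false)
    simp only [Nm, fromBlocks_apply₂₁, N21, Matrix.of_apply, calA]
    rcases lt_trichotomy j i with h | h | h
    · rw [if_pos (Or.inr (Or.inl h))]
    · rw [if_pos (Or.inl ⟨h.symm, by simp⟩)]
    · rw [if_pos (Or.inr (Or.inr ⟨h, by trivial, by trivial⟩))]
  · -- (i, true), (j, true)
    show Nm b (Sum.inr i.rev) (Sum.inr j.rev) = calA b (i, true) (j, true)
    simp only [Nm, fromBlocks_apply₂₂, N22, Matrix.of_apply, calA]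
    refine if_congr ?_ rfl rfl
    have hri : (i.rev : ℕ) = b - (i + 1) := Fin.val_rev i
    have hrj : (j.rev : ℕ) = b - (j + 1) := Fin.val_rev j
    constructor
    · intro h
      refine Or.inr (Or.inl ?_)
      show (j:ℕ) < (i:ℕ)
      omega
    · rintro (⟨h1, h2⟩ | h | ⟨h1, h2, h3⟩)
      · exact absurd rfl h2
      · have : (j:ℕ) < (i:ℕ) := h
        omega
      · exact absurd h3 (by simp)

end CalApf

/-- The characteristic polynomial of `𝒜` is `X^{b−1}·(X − b)·(X + 1)^b`. -/
theorem calA_charpoly (b : ℕ) (hb : 2 ≤ b) :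
    (calA b).charpoly =
      Polynomial.X ^ (b - 1) * (Polynomial.X - Polynomial.C (b : ℚ)) *
        (Polynomial.X + 1) ^ b := by
  have h0 : (calA b).charpoly = (CalApf.Nm b).charpoly := by
    rw [← CalApf.reindex_eq b, Matrix.charpoly_reindex]
  rw [h0, CalApf.charNm b hb, CalApf.charTm b (by omega)]
  ring
end

section
/- Fix an integer b ≥ 2 and let 𝒜 be the 2b × 2b matrix over ℚ with rows and columns indexed by pairs (i,R), i ∈ {0, …, b−1}, R ∈ {P,N}, whose entry 𝒜_{(i,R),(j,S)} equals 1 if (i = j and R ≠ S), or (i > j), or (i < j and R = P and S = N), and equals 0 otherwise. Let ζ = (b+1)/b and let e be the vector with coordinates e_{(i,P)} = b·ζ^i and e_{(i,N)} = (i+1)·ζ^i for i = 0, …, b−1. Then 𝒜 · e = b · e, i.e. e is an eigenvector of 𝒜 with eigenvalue b. -/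
private lemma sum_if_lt (f : ℕ → ℚ) {m n : ℕ} (h : m ≤ n) :
    ∑ j ∈ Finset.range n, (if j < m then f j else 0) = ∑ j ∈ Finset.range m, f j := by
  rw [← Finset.sum_subset (Finset.range_subset_range.mpr h)
      (fun x _ hx => by simp [Nat.lt_irrefl, (Finset.mem_range.not.mp hx)])]
  exact Finset.sum_congr rfl fun j hj => by simp [Finset.mem_range.mp hj]

private lemma sum1 (B ζ : ℚ) (h : B * ζ = B + 1) (k : ℕ) :
    ∑ j ∈ Finset.range k, ζ ^ j = B * (ζ ^ k - 1) := by
  induction k with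
  | zero => simp
  | succ k ih =>
    rw [Finset.sum_range_succ, ih, pow_succ]
    linear_combination -ζ ^ k * h

private lemma sum2 (B ζ : ℚ) (h : B * ζ = B + 1) (k : ℕ) :
    ∑ j ∈ Finset.range k, ((j : ℚ) + 1) * ζ ^ j = (B * k - B ^ 2) * ζ ^ k + B ^ 2 := by
  induction k with
  | zero => simp
  | succ k ih =>
    rw [Finset.sum_range_succ, ih, pow_succ]
    push_cast
    linear_combination ((B : ℚ) - k - 1) * ζ ^ k * h

/-- With `ζ = (b+1)/b`, the vector `e` given by `e_(i,P) = b·ζ^i` and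
`e_(i,N) = (i+1)·ζ^i` is an eigenvector of `𝒜` with eigenvalue `b`. -/
theorem calA_eigenvector (b : ℕ) (hb : 2 ≤ b) (ζ : ℚ)
    (hζ : ζ = ((b : ℚ) + 1) / (b : ℚ))
    (e : Fin b × Bool → ℚ)
    (heP : ∀ i : Fin b, e (i, true) = (b : ℚ) * ζ ^ (i : ℕ))
    (heN : ∀ i : Fin b, e (i, false) = ((i : ℕ) + 1 : ℚ) * ζ ^ (i : ℕ)) :
    (calA b).mulVec e = (b : ℚ) • e := by
  have hb0 : (b : ℚ) ≠ 0 := Nat.cast_ne_zero.mpr (by omega)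
  have hBζ : (b : ℚ) * ζ = (b : ℚ) + 1 := by rw [hζ]; field_simp
  funext p
  obtain ⟨i, R⟩ := p
  simp only [Matrix.mulVec, dotProduct, Pi.smul_apply, smul_eq_mul]
  rw [Fintype.sum_prod_type]
  simp only [Fintype.sum_bool]
  cases R with
  | true =>
    have key : ∀ j : Fin b,
        calA b (i, true) (j, true) * e (j, true) + calA b (i, true) (j, false) * e (j, false)
        = (if (j : ℕ) < (i : ℕ) then (b : ℚ) * ζ ^ (j : ℕ) else 0)
          + ((j : ℕ) + 1 : ℚ) * ζ ^ (j : ℕ) := by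
      intro j
      rcases lt_trichotomy j i with h | h | h
      · have h' : (j : ℕ) < (i : ℕ) := h
        simp [calA, h, h', ne_of_gt h, lt_asymm h, heP, heN]
      · subst h
        simp [calA, lt_irrefl, heP, heN]
      · have h' : ¬ (j : ℕ) < (i : ℕ) := not_lt.mpr (le_of_lt h)
        simp [calA, h, h', ne_of_lt h, lt_asymm h, heP, heN]
    rw [Finset.sum_congr rfl (fun j _ => key j), Finset.sum_add_distrib,
      Fin.sum_univ_eq_sum_range (fun n => if n < (i : ℕ) then (b : ℚ) * ζ ^ n else 0) b,
      Fin.sum_univ_eq_sum_range (fun n => ((n : ℚ) + 1) * ζ ^ n) b,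
      sum_if_lt _ (le_of_lt i.isLt), ← Finset.mul_sum,
      sum1 (b : ℚ) ζ hBζ, sum2 (b : ℚ) ζ hBζ, heP]
    ring
  | false =>
    have key : ∀ j : Fin b,
        calA b (i, false) (j, true) * e (j, true) + calA b (i, false) (j, false) * e (j, false)
        = (if (j : ℕ) < (i : ℕ) + 1 then (b : ℚ) * ζ ^ (j : ℕ) else 0)
          + (if (j : ℕ) < (i : ℕ) then ((j : ℕ) + 1 : ℚ) * ζ ^ (j : ℕ) else 0) := by
      intro j
      rcases lt_trichotomy j i with h | h | h
      · have h' : (j : ℕ) < (i : ℕ) := h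
        have h'' : (j : ℕ) < (i : ℕ) + 1 := by omega
        simp [calA, h, h', h'', ne_of_gt h, lt_asymm h, heP, heN]
      · subst h
        simp [calA, lt_irrefl, heP, heN]
      · have h' : ¬ (j : ℕ) < (i : ℕ) := not_lt.mpr (le_of_lt h)
        have h'' : ¬ (j : ℕ) < (i : ℕ) + 1 := by
          have : (i : ℕ) < (j : ℕ) := h
          omega
        simp [calA, h, h', h'', ne_of_lt h, lt_asymm h, heP, heN]
    rw [Finset.sum_congr rfl (fun j _ => key j), Finset.sum_add_distrib,
      Fin.sum_univ_eq_sum_range (fun n => if n < (i : ℕ) + 1 then (b : ℚ) * ζ ^ n else 0) b,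
      Fin.sum_univ_eq_sum_range (fun n => if n < (i : ℕ) then ((n : ℚ) + 1) * ζ ^ n else 0) b,
      sum_if_lt _ i.isLt, sum_if_lt _ (le_of_lt i.isLt), ← Finset.mul_sum,
      sum1 (b : ℚ) ζ hBζ, sum2 (b : ℚ) ζ hBζ, heN]
    simp only [Nat.succ_eq_add_one, pow_succ]
    linear_combination ((b : ℚ) * ζ ^ (i : ℕ)) * hBζ
end

section
/- Fix an integer b ≥ 2 and let 𝒜 be the 2b × 2b matrix over ℚ with rows and columns indexed by pairs (i,R), i ∈ {0, …, b−1}, R ∈ {P,N}, whose entry 𝒜_{(i,R),(j,S)} equals 1 if (i = j and R ≠ S), or (i > j), or (i < j and R = P and S = N), and equals 0 otherwise. For 1 ≤ i ≤ b−1 define the vector f_i by f_i(b−i−1, N) = −i, f_i(j, R) = 1 for every j with b−i ≤ j ≤ b−1 and every R ∈ {P,N}, and f_i(j,R) = 0 otherwise. Then 𝒜 · f_1 = 0, and for every i with 2 ≤ i ≤ b−1 one has 𝒜 · f_i = f_1 + f_2 + ⋯ + f_{i−1}. -/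
set_option maxHeartbeats 1600000 in
/-- For `1 ≤ i ≤ b−1`, let `f_i` have coordinate `−i` at `(b−i−1, N)`,
coordinate `1` at `(j, R)` for `b−i ≤ j ≤ b−1` and both `R`, and `0` elsewhere.
Then `𝒜·f_1 = 0` and `𝒜·f_i = f_1 + f_2 + ⋯ + f_{i−1}` for `2 ≤ i ≤ b−1`. -/
theorem calA_kernel_vectors (b : ℕ) (hb : 2 ≤ b)
    (f : ℕ → Fin b × Bool → ℚ)
    (hf : ∀ i, 1 ≤ i → i ≤ b - 1 → ∀ p : Fin b × Bool,
      f i p = if (p.1 : ℕ) = b - i - 1 ∧ p.2 = false then -(i : ℚ)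
        else if b - i ≤ (p.1 : ℕ) then 1 else 0) :
    (calA b).mulVec (f 1) = 0 ∧
      ∀ i, 2 ≤ i → i ≤ b - 1 →
        (calA b).mulVec (f i) = ∑ k ∈ Finset.Icc 1 (i - 1), f k := by
  classical
  set g : ℕ → Fin b × Bool → ℚ := fun i p =>
    if (p.1 : ℕ) = b - i - 1 ∧ p.2 = false then -(i : ℚ)
      else if b - i ≤ (p.1 : ℕ) then 1 else 0 with hgdef
  have hfg : ∀ i, 1 ≤ i → i ≤ b - 1 → f i = g i := by
    intro i h1 h2; funext p; rw [hf i h1 h2 p]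
  have key : ∀ i, 1 ≤ i → i ≤ b - 1 →
      (calA b).mulVec (g i) = ∑ k ∈ Finset.Icc 1 (i - 1), g k := by
    intro i hi1
    induction i, hi1 using Nat.le_induction with
    | base =>
      intro _
      have h1 : g 1 = Pi.single ((⟨b-2, by omega⟩ : Fin b), false) (-1 : ℚ)
          + (Pi.single ((⟨b-1, by omega⟩ : Fin b), false) (1 : ℚ)
            + Pi.single ((⟨b-1, by omega⟩ : Fin b), true) (1 : ℚ)) := by
        funext p
        obtain ⟨x, R⟩ := p
        have hx := x.isLt
        cases R <;>
          simp [hgdef, Pi.single_apply, Prod.ext_iff, Fin.ext_iff] <;>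
          split_ifs <;> (try push_cast) <;> first | ring1 | (exfalso; omega)
      rw [show Finset.Icc 1 (1-1) = ∅ from Finset.Icc_eq_empty (by omega),
        Finset.sum_empty, h1, Matrix.mulVec_add, Matrix.mulVec_single, Matrix.mulVec_add,
        Matrix.mulVec_single, Matrix.mulVec_single]
      funext p
      obtain ⟨x, R⟩ := p
      have hx := x.isLt
      cases R <;>
        simp [calA, Fin.lt_def, Fin.ext_iff] <;>
        split_ifs <;> (try push_cast) <;> first | ring1 | (exfalso; omega)
    | succ i hi IH =>
      intro hib
      have hib' : i ≤ b - 1 := by omega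
      have hd : g (i+1) = g i
          + (Pi.single ((⟨b-i-1, by omega⟩ : Fin b), false) ((i:ℚ)+1)
            + (Pi.single ((⟨b-i-2, by omega⟩ : Fin b), false) (-((i:ℚ)+1))
              + Pi.single ((⟨b-i-1, by omega⟩ : Fin b), true) (1 : ℚ))) := by
        funext p
        obtain ⟨x, R⟩ := p
        have hx := x.isLt
        cases R <;>
          simp [hgdef, Pi.single_apply, Prod.ext_iff, Fin.ext_iff] <;>
          split_ifs <;> (try push_cast) <;> first | ring1 | (exfalso; omega)
      have hsum : ∑ k ∈ Finset.Icc 1 (i+1-1), g k = ∑ k ∈ Finset.Icc 1 (i-1), g k + g i := by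
        rw [show i + 1 - 1 = (i - 1) + 1 from by omega,
          Finset.sum_Icc_succ_top (by omega : 1 ≤ i - 1 + 1),
          show i - 1 + 1 = i from by omega]
      rw [hd, Matrix.mulVec_add, IH hib', hsum, Matrix.mulVec_add, Matrix.mulVec_single,
        Matrix.mulVec_add, Matrix.mulVec_single, Matrix.mulVec_single]
      congr 1
      funext p
      obtain ⟨x, R⟩ := p
      have hx := x.isLt
      cases R <;>
        simp [calA, hgdef, Fin.lt_def, Fin.ext_iff] <;>
        split_ifs <;> (try push_cast) <;> first | ring1 | (exfalso; omega)
  constructor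
  · rw [hfg 1 le_rfl (by omega), key 1 le_rfl (by omega)]
    rw [show Finset.Icc 1 (1-1) = ∅ from Finset.Icc_eq_empty (by omega), Finset.sum_empty]
  · intro i h2 hib
    rw [hfg i (by omega) hib, key i (by omega) hib]
    refine Finset.sum_congr rfl fun k hk => ?_
    simp only [Finset.mem_Icc] at hk
    rw [hfg k hk.1 (by omega)]
end
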